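/- Fix an integer n ≥ 1 and for each h > 0 let K_h be a random variable with the beta-binomial distribution BB(n, cπ(h), c(1−π(h))). Then for every k ∈ {1,…,n}, P(K_h = k) = c·C(n,k)·[Γ(k)·Γ(n−k+c)/Γ(n+c)]·r(t)·h + o(h) as h → 0+. -/

import Mathlib

open scoped BigOperators
open Filter Topology Asymptotics

/-- The Beta function `B(a,b) = Γ(a)Γ(b)/Γ(a+b)`. -/
noncomputable def betaFn (a b : ℝ) : ℝ := Real.Gamma a * Real.Gamma b / Real.Gamma (a + b)

/-- The pmf of the beta-binomial distribution `BB(n, α, β)`: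
`P(K = k) = C(n,k) · B(k+α, n−k+β) / B(α,β)`. -/
noncomputable def bbPmf (n : ℕ) (α β : ℝ) (k : ℕ) : ℝ :=
  (n.choose k : ℝ) * betaFn ((k : ℝ) + α) ((n : ℝ) - (k : ℝ) + β) / betaFn α β

/-- `π(h) = 1 − exp(−∫_t^{t+h} r(s) ds)`. -/
noncomputable def pih (r : ℝ → ℝ) (t h : ℝ) : ℝ :=
  1 - Real.exp (-(∫ s in t..(t + h), r s))


section Aux

variable (r : ℝ → ℝ) (t c : ℝ)

/-- continuity-at-positive-point for Gamma -/
lemma gammaContAt {s : ℝ} (hs : 0 < s) : ContinuousAt Real.Gamma s := by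
  refine (Real.differentiableAt_Gamma ?_).continuousAt
  intro m h
  have hm : -(m:ℝ) ≤ 0 := neg_nonpos.mpr (Nat.cast_nonneg m)
  rw [h] at hs; linarith

lemma pih_hasDerivAt (hr_cont : Continuous r) :
    HasDerivAt (fun h => pih r t h) (r t) 0 := by
  have hF : HasDerivAt (fun h : ℝ => ∫ s in t..(t + h), r s) (r t) 0 := by
    have h1 : HasDerivAt (fun u : ℝ => ∫ s in t..u, r s) (r t) t :=
      intervalIntegral.integral_hasDerivAt_right (hr_cont.intervalIntegrable _ _)
        (hr_cont.stronglyMeasurableAtFilter _ _) hr_cont.continuousAt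
    have h2 : HasDerivAt (fun h : ℝ => t + h) 1 0 := by
      simpa using (hasDerivAt_id (0:ℝ)).const_add t
    have h1' : HasDerivAt (fun u : ℝ => ∫ s in t..u, r s) (r t) (t + 0) := by
      simpa using h1
    have := HasDerivAt.comp (𝕜 := ℝ) 0 h1' h2
    simpa [Function.comp_def] using this
  have hE : HasDerivAt (fun h : ℝ => Real.exp (-(∫ s in t..(t + h), r s))) (-(r t)) 0 := by
    have hneg : HasDerivAt (fun h : ℝ => -(∫ s in t..(t + h), r s)) (-(r t)) 0 := hF.neg
    have := (Real.hasDerivAt_exp (-(∫ s in t..(t + (0:ℝ)), r s))).comp 0 hneg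
    simpa [Real.exp_zero, Function.comp_def] using this
  simpa [pih] using hE.const_sub 1
end Aux

/-- for `K_h ~ BB(n, cπ(h), c(1−π(h)))` and every `k ∈ {1,…,n}`,
`P(K_h = k) = c·C(n,k)·[Γ(k)Γ(n−k+c)/Γ(n+c)]·r(t)·h + o(h)` as `h → 0+`. -/
theorem bbPmf_transition_rate
    (r : ℝ → ℝ) (hr_cont : Continuous r) (hr_pos : ∀ s, 0 < r s)
    (t c : ℝ) (hc : 0 < c) (n : ℕ) (hn : 1 ≤ n)
    (k : ℕ) (hk1 : 1 ≤ k) (hkn : k ≤ n) :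
    (fun h : ℝ =>
        bbPmf n (c * pih r t h) (c * (1 - pih r t h)) k
          - c * (n.choose k : ℝ) *
              (Real.Gamma (k : ℝ) * Real.Gamma ((n : ℝ) - (k : ℝ) + c)
                / Real.Gamma ((n : ℝ) + c)) * r t * h)
      =o[𝓝[>] (0 : ℝ)] (fun h => h) := by
  set π : ℝ → ℝ := fun h => pih r t h with hπ
  -- basic facts about π
  have hπ0 : π 0 = 0 := by simp [hπ, pih]
  have hπderiv : HasDerivAt π (r t) 0 := pih_hasDerivAt r t hr_cont
  have hπpos : ∀ h : ℝ, 0 < h → 0 < π h ∧ π h < 1 := by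
    intro h hh
    have hInt : 0 < ∫ s in t..(t + h), r s :=
      intervalIntegral.intervalIntegral_pos_of_pos (hr_cont.intervalIntegrable _ _)
        hr_pos (by linarith)
    constructor
    · have : Real.exp (-(∫ s in t..(t + h), r s)) < 1 := by
        rw [Real.exp_lt_one_iff]; linarith
      simp only [hπ, pih]; linarith
    · have : 0 < Real.exp (-(∫ s in t..(t + h), r s)) := Real.exp_pos _
      simp only [hπ, pih]; linarith
  -- the auxiliary function G
  set G : ℝ → ℝ := fun p =>
    (n.choose k : ℝ) * betaFn ((k : ℝ) + c * p) ((n : ℝ) - (k : ℝ) + c - c * p)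
      * Real.Gamma c * c / (Real.Gamma (c * p + 1) * Real.Gamma (c - c * p)) with hG
  have hkpos : (0:ℝ) < (k:ℝ) := by exact_mod_cast hk1
  have hnk : (0:ℝ) < (n:ℝ) - (k:ℝ) + c := by
    have : (k:ℝ) ≤ (n:ℝ) := by exact_mod_cast hkn
    linarith
  have hnc : (0:ℝ) < (n:ℝ) + c := by
    have : (0:ℝ) < (n:ℝ) := by exact_mod_cast hn
    linarith
  -- G is continuous at 0
  have hGcont : ContinuousAt G 0 := by
    have h1 : ContinuousAt (fun p : ℝ => Real.Gamma ((k : ℝ) + c * p)) 0 :=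
      ContinuousAt.comp (x := (0:ℝ)) (f := fun p : ℝ => (k : ℝ) + c * p)
        (gammaContAt (by simpa using hkpos)) (by fun_prop)
    have h2 : ContinuousAt (fun p : ℝ => Real.Gamma ((n : ℝ) - (k : ℝ) + c - c * p)) 0 :=
      ContinuousAt.comp (x := (0:ℝ)) (f := fun p : ℝ => (n : ℝ) - (k : ℝ) + c - c * p)
        (gammaContAt (by simpa using hnk)) (by fun_prop)
    have h3 : ContinuousAt (fun p : ℝ => Real.Gamma (c * p + 1)) 0 :=
      ContinuousAt.comp (x := (0:ℝ)) (f := fun p : ℝ => c * p + 1)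
        (gammaContAt (by norm_num)) (by fun_prop)
    have h4 : ContinuousAt (fun p : ℝ => Real.Gamma (c - c * p)) 0 :=
      ContinuousAt.comp (x := (0:ℝ)) (f := fun p : ℝ => c - c * p)
        (gammaContAt (by simpa using hc)) (by fun_prop)
    have hden : (Real.Gamma (c * 0 + 1) * Real.Gamma (c - c * 0)) ≠ 0 := by
      simp only [mul_zero, zero_add, sub_zero]
      exact mul_ne_zero (Real.Gamma_pos_of_pos one_pos).ne'
        (Real.Gamma_pos_of_pos hc).ne'
    have hbeta : ContinuousAt (fun p : ℝ =>
        betaFn ((k : ℝ) + c * p) ((n : ℝ) - (k : ℝ) + c - c * p)) 0 := by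
      simp only [betaFn]
      have hsum : ∀ p : ℝ, (k : ℝ) + c * p + ((n : ℝ) - (k : ℝ) + c - c * p) = (n:ℝ) + c := by
        intro p; ring
      have hden2 : ContinuousAt (fun p : ℝ =>
          Real.Gamma ((k : ℝ) + c * p + ((n : ℝ) - (k : ℝ) + c - c * p))) 0 :=
        ContinuousAt.comp (x := (0:ℝ))
          (f := fun p : ℝ => (k : ℝ) + c * p + ((n : ℝ) - (k : ℝ) + c - c * p))
          (gammaContAt (by show (0:ℝ) < (k:ℝ) + c * 0 + ((n:ℝ) - (k:ℝ) + c - c * 0); rw [hsum 0]; exact hnc)) (by fun_prop)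
      exact (h1.mul h2).div hden2
        (by rw [hsum 0]; exact (Real.Gamma_pos_of_pos hnc).ne')
    exact ((((continuousAt_const.mul hbeta).mul continuousAt_const).mul
      continuousAt_const).div (h3.mul h4) hden)
  -- value of G at 0
  have hG0 : G 0 = c * (n.choose k : ℝ) *
      (Real.Gamma (k : ℝ) * Real.Gamma ((n : ℝ) - (k : ℝ) + c) / Real.Gamma ((n : ℝ) + c)) := by
    simp only [hG, mul_zero, zero_add, sub_zero, add_zero, betaFn, Real.Gamma_one, one_mul]
    have : (k:ℝ) + ((n:ℝ) - (k:ℝ) + c) = (n:ℝ) + c := by ring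
    rw [this]
    have hΓc : Real.Gamma c ≠ 0 := (Real.Gamma_pos_of_pos hc).ne'
    have hΓnc : Real.Gamma ((n:ℝ) + c) ≠ 0 := (Real.Gamma_pos_of_pos hnc).ne'
    field_simp
  -- key identity: bbPmf = π h * G (π h) for h > 0
  have hkey : ∀ h : ℝ, 0 < h →
      bbPmf n (c * π h) (c * (1 - π h)) k = π h * G (π h) := by
    intro h hh
    obtain ⟨hp0, hp1⟩ := hπpos h hh
    have hcπ : 0 < c * π h := by positivity
    have hcπ1 : 0 < c - c * π h := by nlinarith
    have heq : c * (1 - π h) = c - c * π h := by ring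
    have hΓ1 : Real.Gamma (c * π h) = Real.Gamma (c * π h + 1) / (c * π h) := by
      rw [Real.Gamma_add_one hcπ.ne']
      field_simp
    have hsum : c * π h + (c - c * π h) = c := by ring
    simp only [bbPmf, heq, betaFn]
    rw [hsum, hΓ1]
    have h2 : ((n:ℝ) - (k:ℝ) + (c - c * π h)) = ((n:ℝ) - (k:ℝ) + c - c * π h) := by ring
    rw [h2]
    simp only [hG, betaFn]
    have e1 : Real.Gamma (c * π h + 1) ≠ 0 :=
      (Real.Gamma_pos_of_pos (by linarith)).ne'
    have e2 : Real.Gamma (c - c * π h) ≠ 0 := (Real.Gamma_pos_of_pos hcπ1).ne'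
    have e3 : Real.Gamma c ≠ 0 := (Real.Gamma_pos_of_pos hc).ne'
    have e4 : Real.Gamma ((k:ℝ) + c * π h + ((n:ℝ) - (k:ℝ) + c - c * π h)) ≠ 0 := by
      have : (k:ℝ) + c * π h + ((n:ℝ) - (k:ℝ) + c - c * π h) = (n:ℝ) + c := by ring
      rw [this]; exact (Real.Gamma_pos_of_pos hnc).ne'
    field_simp
  -- the limit L
  set L : ℝ := c * (n.choose k : ℝ) *
      (Real.Gamma (k : ℝ) * Real.Gamma ((n : ℝ) - (k : ℝ) + c) / Real.Gamma ((n : ℝ) + c)) * r t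
    with hL
  -- π h / h → r t within 𝓝[>] 0
  have hslope : Tendsto (fun h => π h / h) (𝓝[>] (0:ℝ)) (𝓝 (r t)) := by
    have := hasDerivAt_iff_tendsto_slope.mp hπderiv
    have hle : 𝓝[>] (0:ℝ) ≤ 𝓝[≠] (0:ℝ) :=
      nhdsWithin_mono 0 (fun x hx => ne_of_gt hx)
    have h' := this.mono_left hle
    refine h'.congr' ?_
    filter_upwards [self_mem_nhdsWithin] with x hx
    simp [slope, hπ0, div_eq_inv_mul]
  -- π h → 0 within 𝓝[>] 0
  have hπtend : Tendsto π (𝓝[>] (0:ℝ)) (𝓝 0) := by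
    have := hπderiv.continuousAt.tendsto
    rw [hπ0] at this
    exact this.mono_left nhdsWithin_le_nhds
  -- G (π h) → G 0
  have hGπ : Tendsto (fun h => G (π h)) (𝓝[>] (0:ℝ)) (𝓝 (G 0)) :=
    hGcont.tendsto.comp hπtend
  -- combined: bbPmf / h → L
  have hmain : Tendsto (fun h => bbPmf n (c * π h) (c * (1 - π h)) k / h)
      (𝓝[>] (0:ℝ)) (𝓝 L) := by
    have := hslope.mul hGπ
    rw [hG0] at this
    have hLe : r t * (c * (n.choose k : ℝ) *
        (Real.Gamma (k : ℝ) * Real.Gamma ((n : ℝ) - (k : ℝ) + c) / Real.Gamma ((n : ℝ) + c))) = L := by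
      rw [hL]; ring
    rw [hLe] at this
    refine this.congr' ?_
    filter_upwards [self_mem_nhdsWithin] with x hx
    rw [hkey x hx]
    ring
  -- conclude little-o
  rw [Asymptotics.isLittleO_iff_tendsto' (by
    filter_upwards [self_mem_nhdsWithin] with x hx h0
    exact absurd h0 (ne_of_gt hx))]
  have : Tendsto (fun h => bbPmf n (c * π h) (c * (1 - π h)) k / h - L) (𝓝[>] (0:ℝ)) (𝓝 0) := by
    simpa using hmain.sub_const L
  refine this.congr' ?_
  filter_upwards [self_mem_nhdsWithin] with x hx
  have hx0 : x ≠ 0 := ne_of_gt hx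
  field_simp [hL]
  ring
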